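/- Let η and γ be real constants and set θ(x,t) = ηx + 4η³t + γ. Then the order-one positon u(x,t) = 16η² [ 2cos²θ + (ηx + 12η³t) sin 2θ ] / [ 2(ηx + 12η³t) + sin 2θ ]², which equals −2 ∂_x² ln W(cos θ, ∂_λ cos θ) with λ = η², satisfies the KdV equation u_t − 6 u u_x + u_{xxx} = 0 at every point (x,t) where 2(ηx + 12η³t) + sin 2θ ≠ 0. -/

import Mathlib

set_option maxHeartbeats 2000000

/-- Partial derivative with respect to the first variable `x`. -/
noncomputable def px (f : ℝ × ℝ → ℝ) : ℝ × ℝ → ℝ :=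
  fun p => deriv (fun x => f (x, p.2)) p.1

/-- Partial derivative with respect to the second variable `t`. -/
noncomputable def pt (f : ℝ × ℝ → ℝ) : ℝ × ℝ → ℝ :=
  fun p => deriv (fun t => f (p.1, t)) p.2

lemma mono (a m c : ℝ) (i j l : ℕ) (z : ℝ) :
    HasDerivAt (fun z => c * ((a*z+m)^i * (Real.sin (2*z)^j * Real.cos (2*z)^l)))
      (c * ((↑i * (a*z+m)^(i-1) * a) * (Real.sin (2*z)^j * Real.cos (2*z)^l)
        + (a*z+m)^i * ((↑j * Real.sin (2*z)^(j-1) * (Real.cos (2*z) * 2)) * Real.cos (2*z)^l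
          + Real.sin (2*z)^j * (↑l * Real.cos (2*z)^(l-1) * (-Real.sin (2*z) * 2))))) z := by
  have h2 : HasDerivAt (fun z : ℝ => 2*z) 2 z := by simpa using (hasDerivAt_id z).const_mul 2
  have hw : HasDerivAt (fun z : ℝ => a*z+m) a z := by
    simpa using ((hasDerivAt_id z).const_mul a).add_const m
  have hA : HasDerivAt (fun z : ℝ => Real.sin (2*z)) (Real.cos (2*z) * 2) z :=
    (Real.hasDerivAt_sin (2*z)).comp z h2
  have hB : HasDerivAt (fun z : ℝ => Real.cos (2*z)) (-Real.sin (2*z) * 2) z :=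
    (Real.hasDerivAt_cos (2*z)).comp z h2
  exact ((hw.pow i).mul ((hA.pow j).mul (hB.pow l))).const_mul c

noncomputable def NN0 (a m : ℝ) : ℝ → ℝ := fun z =>
    (1 * a^0) * ((a*z+m)^0 * (Real.sin (2*z)^0 * Real.cos (2*z)^0))
    + (1 * a^0) * ((a*z+m)^0 * (Real.sin (2*z)^0 * Real.cos (2*z)^1))
    + (1 * a^0) * ((a*z+m)^1 * (Real.sin (2*z)^1 * Real.cos (2*z)^0))

noncomputable def NN1 (a m : ℝ) : ℝ → ℝ := fun z =>
    (-4 * a^0) * ((a*z+m)^0 * (Real.sin (2*z)^0 * Real.cos (2*z)^1))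
    + (-4 * a^0) * ((a*z+m)^0 * (Real.sin (2*z)^0 * Real.cos (2*z)^2))
    + (-2 * a^0) * ((a*z+m)^0 * (Real.sin (2*z)^2 * Real.cos (2*z)^0))
    + (-4 * a^0) * ((a*z+m)^1 * (Real.sin (2*z)^1 * Real.cos (2*z)^0))
    + (-2 * a^0) * ((a*z+m)^1 * (Real.sin (2*z)^1 * Real.cos (2*z)^1))
    + (4 * a^0) * ((a*z+m)^2 * (Real.sin (2*z)^0 * Real.cos (2*z)^1))
    + (-4 * a^1) * ((a*z+m)^0 * (Real.sin (2*z)^0 * Real.cos (2*z)^0))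
    + (-4 * a^1) * ((a*z+m)^0 * (Real.sin (2*z)^0 * Real.cos (2*z)^1))
    + (1 * a^1) * ((a*z+m)^0 * (Real.sin (2*z)^2 * Real.cos (2*z)^0))
    + (-2 * a^1) * ((a*z+m)^1 * (Real.sin (2*z)^1 * Real.cos (2*z)^0))

noncomputable def NN2 (a m : ℝ) : ℝ → ℝ := fun z =>
    (24 * a^0) * ((a*z+m)^0 * (Real.sin (2*z)^0 * Real.cos (2*z)^2))
    + (24 * a^0) * ((a*z+m)^0 * (Real.sin (2*z)^0 * Real.cos (2*z)^3))
    + (8 * a^0) * ((a*z+m)^0 * (Real.sin (2*z)^2 * Real.cos (2*z)^0))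
    + (20 * a^0) * ((a*z+m)^0 * (Real.sin (2*z)^2 * Real.cos (2*z)^1))
    + (16 * a^0) * ((a*z+m)^1 * (Real.sin (2*z)^1 * Real.cos (2*z)^0))
    + (32 * a^0) * ((a*z+m)^1 * (Real.sin (2*z)^1 * Real.cos (2*z)^1))
    + (8 * a^0) * ((a*z+m)^1 * (Real.sin (2*z)^1 * Real.cos (2*z)^2))
    + (4 * a^0) * ((a*z+m)^1 * (Real.sin (2*z)^3 * Real.cos (2*z)^0))
    + (-16 * a^0) * ((a*z+m)^2 * (Real.sin (2*z)^0 * Real.cos (2*z)^1))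
    + (-32 * a^0) * ((a*z+m)^2 * (Real.sin (2*z)^0 * Real.cos (2*z)^2))
    + (-16 * a^0) * ((a*z+m)^3 * (Real.sin (2*z)^1 * Real.cos (2*z)^0))
    + (48 * a^1) * ((a*z+m)^0 * (Real.sin (2*z)^0 * Real.cos (2*z)^1))
    + (48 * a^1) * ((a*z+m)^0 * (Real.sin (2*z)^0 * Real.cos (2*z)^2))
    + (16 * a^1) * ((a*z+m)^0 * (Real.sin (2*z)^2 * Real.cos (2*z)^0))
    + (-4 * a^1) * ((a*z+m)^0 * (Real.sin (2*z)^2 * Real.cos (2*z)^1))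
    + (32 * a^1) * ((a*z+m)^1 * (Real.sin (2*z)^1 * Real.cos (2*z)^0))
    + (32 * a^1) * ((a*z+m)^1 * (Real.sin (2*z)^1 * Real.cos (2*z)^1))
    + (-16 * a^1) * ((a*z+m)^2 * (Real.sin (2*z)^0 * Real.cos (2*z)^1))
    + (24 * a^2) * ((a*z+m)^0 * (Real.sin (2*z)^0 * Real.cos (2*z)^0))
    + (24 * a^2) * ((a*z+m)^0 * (Real.sin (2*z)^0 * Real.cos (2*z)^1))
    + (-8 * a^2) * ((a*z+m)^0 * (Real.sin (2*z)^2 * Real.cos (2*z)^0))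
    + (8 * a^2) * ((a*z+m)^1 * (Real.sin (2*z)^1 * Real.cos (2*z)^0))

noncomputable def NN3 (a m : ℝ) : ℝ → ℝ := fun z =>
    (-192 * a^0) * ((a*z+m)^0 * (Real.sin (2*z)^0 * Real.cos (2*z)^3))
    + (-192 * a^0) * ((a*z+m)^0 * (Real.sin (2*z)^0 * Real.cos (2*z)^4))
    + (-128 * a^0) * ((a*z+m)^0 * (Real.sin (2*z)^2 * Real.cos (2*z)^1))
    + (-224 * a^0) * ((a*z+m)^0 * (Real.sin (2*z)^2 * Real.cos (2*z)^2))
    + (-40 * a^0) * ((a*z+m)^0 * (Real.sin (2*z)^4 * Real.cos (2*z)^0))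
    + (-224 * a^0) * ((a*z+m)^1 * (Real.sin (2*z)^1 * Real.cos (2*z)^1))
    + (-320 * a^0) * ((a*z+m)^1 * (Real.sin (2*z)^1 * Real.cos (2*z)^2))
    + (-48 * a^0) * ((a*z+m)^1 * (Real.sin (2*z)^1 * Real.cos (2*z)^3))
    + (-144 * a^0) * ((a*z+m)^1 * (Real.sin (2*z)^3 * Real.cos (2*z)^0))
    + (-40 * a^0) * ((a*z+m)^1 * (Real.sin (2*z)^3 * Real.cos (2*z)^1))
    + (64 * a^0) * ((a*z+m)^2 * (Real.sin (2*z)^0 * Real.cos (2*z)^1))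
    + (256 * a^0) * ((a*z+m)^2 * (Real.sin (2*z)^0 * Real.cos (2*z)^2))
    + (288 * a^0) * ((a*z+m)^2 * (Real.sin (2*z)^0 * Real.cos (2*z)^3))
    + (-96 * a^0) * ((a*z+m)^2 * (Real.sin (2*z)^2 * Real.cos (2*z)^0))
    + (112 * a^0) * ((a*z+m)^2 * (Real.sin (2*z)^2 * Real.cos (2*z)^1))
    + (64 * a^0) * ((a*z+m)^3 * (Real.sin (2*z)^1 * Real.cos (2*z)^0))
    + (352 * a^0) * ((a*z+m)^3 * (Real.sin (2*z)^1 * Real.cos (2*z)^1))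
    + (-64 * a^0) * ((a*z+m)^4 * (Real.sin (2*z)^0 * Real.cos (2*z)^1))
    + (-576 * a^1) * ((a*z+m)^0 * (Real.sin (2*z)^0 * Real.cos (2*z)^2))
    + (-576 * a^1) * ((a*z+m)^0 * (Real.sin (2*z)^0 * Real.cos (2*z)^3))
    + (-144 * a^1) * ((a*z+m)^0 * (Real.sin (2*z)^2 * Real.cos (2*z)^0))
    + (-384 * a^1) * ((a*z+m)^0 * (Real.sin (2*z)^2 * Real.cos (2*z)^1))
    + (24 * a^1) * ((a*z+m)^0 * (Real.sin (2*z)^2 * Real.cos (2*z)^2))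
    + (12 * a^1) * ((a*z+m)^0 * (Real.sin (2*z)^4 * Real.cos (2*z)^0))
    + (-288 * a^1) * ((a*z+m)^1 * (Real.sin (2*z)^1 * Real.cos (2*z)^0))
    + (-672 * a^1) * ((a*z+m)^1 * (Real.sin (2*z)^1 * Real.cos (2*z)^1))
    + (-336 * a^1) * ((a*z+m)^1 * (Real.sin (2*z)^1 * Real.cos (2*z)^2))
    + (-72 * a^1) * ((a*z+m)^1 * (Real.sin (2*z)^3 * Real.cos (2*z)^0))
    + (192 * a^1) * ((a*z+m)^2 * (Real.sin (2*z)^0 * Real.cos (2*z)^1))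
    + (384 * a^1) * ((a*z+m)^2 * (Real.sin (2*z)^0 * Real.cos (2*z)^2))
    + (-144 * a^1) * ((a*z+m)^2 * (Real.sin (2*z)^2 * Real.cos (2*z)^0))
    + (96 * a^1) * ((a*z+m)^3 * (Real.sin (2*z)^1 * Real.cos (2*z)^0))
    + (-576 * a^2) * ((a*z+m)^0 * (Real.sin (2*z)^0 * Real.cos (2*z)^1))
    + (-576 * a^2) * ((a*z+m)^0 * (Real.sin (2*z)^0 * Real.cos (2*z)^2))
    + (-144 * a^2) * ((a*z+m)^0 * (Real.sin (2*z)^2 * Real.cos (2*z)^0))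
    + (96 * a^2) * ((a*z+m)^0 * (Real.sin (2*z)^2 * Real.cos (2*z)^1))
    + (-288 * a^2) * ((a*z+m)^1 * (Real.sin (2*z)^1 * Real.cos (2*z)^0))
    + (-336 * a^2) * ((a*z+m)^1 * (Real.sin (2*z)^1 * Real.cos (2*z)^1))
    + (96 * a^2) * ((a*z+m)^2 * (Real.sin (2*z)^0 * Real.cos (2*z)^1))
    + (-192 * a^3) * ((a*z+m)^0 * (Real.sin (2*z)^0 * Real.cos (2*z)^0))
    + (-192 * a^3) * ((a*z+m)^0 * (Real.sin (2*z)^0 * Real.cos (2*z)^1))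
    + (72 * a^3) * ((a*z+m)^0 * (Real.sin (2*z)^2 * Real.cos (2*z)^0))
    + (-48 * a^3) * ((a*z+m)^1 * (Real.sin (2*z)^1 * Real.cos (2*z)^0))

lemma step0 (η a m z : ℝ) (h : 2*(a*z+m) + Real.sin (2*z) ≠ 0) :
    HasDerivAt (fun z => 16*η^2 * NN0 a m z / (2*(a*z+m) + Real.sin (2*z))^2)
      (16*η^2 * NN1 a m z / (2*(a*z+m) + Real.sin (2*z))^3) z := by
  have h2 : HasDerivAt (fun z : ℝ => 2*z) 2 z := by simpa using (hasDerivAt_id z).const_mul 2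
  have hw : HasDerivAt (fun z : ℝ => a*z+m) a z := by
    simpa using ((hasDerivAt_id z).const_mul a).add_const m
  have hsin : HasDerivAt (fun z : ℝ => Real.sin (2*z)) (Real.cos (2*z) * 2) z :=
    (Real.hasDerivAt_sin (2*z)).comp z h2
  have hden : HasDerivAt (fun z : ℝ => 2*(a*z+m) + Real.sin (2*z)) (2*a + Real.cos (2*z) * 2) z := by
    exact (hw.const_mul 2).add hsin
  have hchain := (((mono a m (1 * a^0) 0 0 0 z).add (mono a m (1 * a^0) 0 0 1 z)).add (mono a m (1 * a^0) 1 1 0 z))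
  have hdiv := (hchain.const_mul (16*η^2)).div (hden.pow 2) (pow_ne_zero 2 h)
  refine hdiv.congr_deriv ?_
  simp only [NN0, NN1, Pi.add_apply, Pi.pow_apply]
  push_cast
  field_simp
  ring

lemma step1 (η a m z : ℝ) (h : 2*(a*z+m) + Real.sin (2*z) ≠ 0) :
    HasDerivAt (fun z => 16*η^2 * NN1 a m z / (2*(a*z+m) + Real.sin (2*z))^3)
      (16*η^2 * NN2 a m z / (2*(a*z+m) + Real.sin (2*z))^4) z := by
  have h2 : HasDerivAt (fun z : ℝ => 2*z) 2 z := by simpa using (hasDerivAt_id z).const_mul 2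
  have hw : HasDerivAt (fun z : ℝ => a*z+m) a z := by
    simpa using ((hasDerivAt_id z).const_mul a).add_const m
  have hsin : HasDerivAt (fun z : ℝ => Real.sin (2*z)) (Real.cos (2*z) * 2) z :=
    (Real.hasDerivAt_sin (2*z)).comp z h2
  have hden : HasDerivAt (fun z : ℝ => 2*(a*z+m) + Real.sin (2*z)) (2*a + Real.cos (2*z) * 2) z := by
    exact (hw.const_mul 2).add hsin
  have hchain := ((((((((((mono a m (-4 * a^0) 0 0 1 z).add (mono a m (-4 * a^0) 0 0 2 z)).add (mono a m (-2 * a^0) 0 2 0 z)).add (mono a m (-4 * a^0) 1 1 0 z)).add (mono a m (-2 * a^0) 1 1 1 z)).add (mono a m (4 * a^0) 2 0 1 z)).add (mono a m (-4 * a^1) 0 0 0 z)).add (mono a m (-4 * a^1) 0 0 1 z)).add (mono a m (1 * a^1) 0 2 0 z)).add (mono a m (-2 * a^1) 1 1 0 z))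
  have hdiv := (hchain.const_mul (16*η^2)).div (hden.pow 3) (pow_ne_zero 3 h)
  refine hdiv.congr_deriv ?_
  simp only [NN1, NN2, Pi.add_apply, Pi.pow_apply]
  push_cast
  field_simp
  ring

lemma step2 (η a m z : ℝ) (h : 2*(a*z+m) + Real.sin (2*z) ≠ 0) :
    HasDerivAt (fun z => 16*η^2 * NN2 a m z / (2*(a*z+m) + Real.sin (2*z))^4)
      (16*η^2 * NN3 a m z / (2*(a*z+m) + Real.sin (2*z))^5) z := by
  have h2 : HasDerivAt (fun z : ℝ => 2*z) 2 z := by simpa using (hasDerivAt_id z).const_mul 2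
  have hw : HasDerivAt (fun z : ℝ => a*z+m) a z := by
    simpa using ((hasDerivAt_id z).const_mul a).add_const m
  have hsin : HasDerivAt (fun z : ℝ => Real.sin (2*z)) (Real.cos (2*z) * 2) z :=
    (Real.hasDerivAt_sin (2*z)).comp z h2
  have hden : HasDerivAt (fun z : ℝ => 2*(a*z+m) + Real.sin (2*z)) (2*a + Real.cos (2*z) * 2) z := by
    exact (hw.const_mul 2).add hsin
  have hchain := ((((((((((((((((((((((mono a m (24 * a^0) 0 0 2 z).add (mono a m (24 * a^0) 0 0 3 z)).add (mono a m (8 * a^0) 0 2 0 z)).add (mono a m (20 * a^0) 0 2 1 z)).add (mono a m (16 * a^0) 1 1 0 z)).add (mono a m (32 * a^0) 1 1 1 z)).add (mono a m (8 * a^0) 1 1 2 z)).add (mono a m (4 * a^0) 1 3 0 z)).add (mono a m (-16 * a^0) 2 0 1 z)).add (mono a m (-32 * a^0) 2 0 2 z)).add (mono a m (-16 * a^0) 3 1 0 z)).add (mono a m (48 * a^1) 0 0 1 z)).add (mono a m (48 * a^1) 0 0 2 z)).add (mono a m (16 * a^1) 0 2 0 z)).add (mono a m (-4 * a^1) 0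 2 1 z)).add (mono a m (32 * a^1) 1 1 0 z)).add (mono a m (32 * a^1) 1 1 1 z)).add (mono a m (-16 * a^1) 2 0 1 z)).add (mono a m (24 * a^2) 0 0 0 z)).add (mono a m (24 * a^2) 0 0 1 z)).add (mono a m (-8 * a^2) 0 2 0 z)).add (mono a m (8 * a^2) 1 1 0 z))
  have hdiv := (hchain.const_mul (16*η^2)).div (hden.pow 4) (pow_ne_zero 4 h)
  refine hdiv.congr_deriv ?_
  simp only [NN2, NN3, Pi.add_apply, Pi.pow_apply]
  push_cast
  field_simp
  ring

noncomputable def QQ0 (w A B : ℝ) : ℝ := (1) * (w^0 * (A^0 * B^0)) + (1) * (w^0 * (A^0 * B^1)) + (1) * (w^1 * (A^1 * B^0))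
noncomputable def QQ11 (w A B : ℝ) : ℝ := (-4) * (w^0 * (A^0 * B^0)) + (-8) * (w^0 * (A^0 * B^1)) + (-4) * (w^0 * (A^0 * B^2)) + (-1) * (w^0 * (A^2 * B^0)) + (-6) * (w^1 * (A^1 * B^0)) + (-2) * (w^1 * (A^1 * B^1)) + (4) * (w^2 * (A^0 * B^1))
noncomputable def QQ13 (w A B : ℝ) : ℝ := (-12) * (w^0 * (A^0 * B^0)) + (-16) * (w^0 * (A^0 * B^1)) + (-4) * (w^0 * (A^0 * B^2)) + (1) * (w^0 * (A^2 * B^0)) + (-10) * (w^1 * (A^1 * B^0)) + (-2) * (w^1 * (A^1 * B^1)) + (4) * (w^2 * (A^0 * B^1))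
noncomputable def QQ31 (w A B : ℝ) : ℝ := (-192) * (w^0 * (A^0 * B^0)) + (-768) * (w^0 * (A^0 * B^1)) + (-1152) * (w^0 * (A^0 * B^2)) + (-768) * (w^0 * (A^0 * B^3)) + (-192) * (w^0 * (A^0 * B^4)) + (-216) * (w^0 * (A^2 * B^0)) + (-416) * (w^0 * (A^2 * B^1)) + (-200) * (w^0 * (A^2 * B^2)) + (-28) * (w^0 * (A^4 * B^0)) + (-624) * (w^1 * (A^1 * B^0)) + (-1232) * (w^1 * (A^1 * B^1)) + (-656) * (w^1 * (A^1 * B^2)) + (-48) * (w^1 * (A^1 * B^3)) + (-216) * (w^1 * (A^3 * B^0)) + (-40) * (w^1 * (A^3 * B^1)) + (352) * (w^2 * (A^0 * B^1)) + (640) * (w^2 * (A^0 * B^2)) + (288) * (w^2 * (A^0 * B^3)) + (-240) * (w^2 * (A^2 * B^0)) + (112) * (w^2 * (A^2 * B^1)) + (160) * (w^3 * (A^1 * B^0)) + (352) * (w^3 * (A^1 * B^1)) + (-64) * (w^4 * (A^0 * B^1))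

lemma final_identity (η w A B : ℝ) (hAB : A^2 + B^2 = 1) (hd : 2*w + A ≠ 0) :
    (16*η^2*QQ13 w A B)/(2*w+A)^3 * (4*η^3)
      - 6 * ((16*η^2*QQ0 w A B)/(2*w+A)^2) * ((16*η^2*QQ11 w A B)/(2*w+A)^3 * η)
      + (16*η^2*QQ31 w A B)/(2*w+A)^5 * η * η * η = 0 := by
  have h0 : (16*η^2*QQ13 w A B) * (4*η^3) * (2*w+A)^2
      - 6 * (16*η^2*QQ0 w A B) * ((16*η^2*QQ11 w A B) * η)
      + (16*η^2*QQ31 w A B) * η * η * η = 0 := by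
    simp only [QQ0, QQ11, QQ13, QQ31]
    linear_combination (16*η^5*((-192) * (w^0 * (A^0 * B^0)) + (-384) * (w^0 * (A^0 * B^1)) + (-192) * (w^0 * (A^0 * B^2)) + (-24) * (w^0 * (A^2 * B^0)) + (-144) * (w^1 * (A^1 * B^0)) + (-48) * (w^1 * (A^1 * B^1)) + (192) * (w^2 * (A^0 * B^0)) + (288) * (w^2 * (A^0 * B^1)))) * hAB
  have h5 : (2*w+A)^5 ≠ 0 := pow_ne_zero _ hd
  have expand : (16*η^2*QQ13 w A B)/(2*w+A)^3 * (4*η^3)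
      - 6 * ((16*η^2*QQ0 w A B)/(2*w+A)^2) * ((16*η^2*QQ11 w A B)/(2*w+A)^3 * η)
      + (16*η^2*QQ31 w A B)/(2*w+A)^5 * η * η * η
      = ((16*η^2*QQ13 w A B) * (4*η^3) * (2*w+A)^2
      - 6 * (16*η^2*QQ0 w A B) * ((16*η^2*QQ11 w A B) * η)
      + (16*η^2*QQ31 w A B) * η * η * η) / (2*w+A)^5 := by
    field_simp
  rw [expand, h0, zero_div]

theorem positon_order_one_solves_kdv
    (η γ : ℝ) (θ : ℝ × ℝ → ℝ) (u : ℝ × ℝ → ℝ)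
    (hθ : ∀ p : ℝ × ℝ, θ p = η * p.1 + 4 * η ^ 3 * p.2 + γ)
    (hu : ∀ p : ℝ × ℝ, u p =
      16 * η ^ 2 * (2 * (Real.cos (θ p)) ^ 2
          + (η * p.1 + 12 * η ^ 3 * p.2) * Real.sin (2 * θ p))
        / (2 * (η * p.1 + 12 * η ^ 3 * p.2) + Real.sin (2 * θ p)) ^ 2) :
    ∀ p : ℝ × ℝ, 2 * (η * p.1 + 12 * η ^ 3 * p.2) + Real.sin (2 * θ p) ≠ 0 →
      pt u p - 6 * u p * px u p + (px^[3] u) p = 0 := by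
  rintro ⟨x, t⟩ hp0
  replace hp0 : 2*(η*x+12*η^3*t) + Real.sin (2*(η*x+4*η^3*t+γ)) ≠ 0 := by
    rw [hθ (x, t)] at hp0; exact hp0
  -- x-direction representation
  have hu_x : ∀ y : ℝ, u (y, t) =
      16*η^2 * NN0 1 (8*η^3*t-γ) (η*y+(4*η^3*t+γ))
        / (2*(1*(η*y+(4*η^3*t+γ))+(8*η^3*t-γ)) + Real.sin (2*(η*y+(4*η^3*t+γ))))^2 := by
    intro y
    rw [hu (y, t), hθ (y, t)]
    simp only [NN0]
    rw [Real.cos_sq]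
    rw [(by ring : η*y+(4*η^3*t+γ) = η*y+4*η^3*t+γ)]
    show (16 * η ^ 2 * (2 * (1/2 + Real.cos (2*(η * (y,t).1 + 4 * η ^ 3 * (y,t).2 + γ))/2)
          + (η * (y,t).1 + 12 * η ^ 3 * (y,t).2) * Real.sin (2 * (η * (y,t).1 + 4 * η ^ 3 * (y,t).2 + γ)))
        / (2 * (η * (y,t).1 + 12 * η ^ 3 * (y,t).2) + Real.sin (2 * (η * (y,t).1 + 4 * η ^ 3 * (y,t).2 + γ))) ^ 2) = _
    show (16 * η ^ 2 * (2 * (1/2 + Real.cos (2*(η * y + 4 * η ^ 3 * t + γ))/2)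
          + (η * y + 12 * η ^ 3 * t) * Real.sin (2 * (η * y + 4 * η ^ 3 * t + γ)))
        / (2 * (η * y + 12 * η ^ 3 * t) + Real.sin (2 * (η * y + 4 * η ^ 3 * t + γ))) ^ 2) = _
    have hden : (2 * (η * y + 12 * η ^ 3 * t) + Real.sin (2 * (η * y + 4 * η ^ 3 * t + γ)))
        = (2*(1*(η*y+4*η^3*t+γ)+(8*η^3*t-γ)) + Real.sin (2*(η*y+4*η^3*t+γ))) := by ring
    rw [hden]
    congr 1
    ring
  -- t-direction representation
  have hu_t : ∀ s : ℝ, u (x, s) =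
      16*η^2 * NN0 3 (-(2*η*x)-3*γ) (4*η^3*s+(η*x+γ))
        / (2*(3*(4*η^3*s+(η*x+γ))+(-(2*η*x)-3*γ)) + Real.sin (2*(4*η^3*s+(η*x+γ))))^2 := by
    intro s
    rw [hu (x, s), hθ (x, s)]
    simp only [NN0]
    rw [Real.cos_sq]
    rw [(by ring : 4*η^3*s+(η*x+γ) = η*x+4*η^3*s+γ)]
    show (16 * η ^ 2 * (2 * (1/2 + Real.cos (2*(η * (x,s).1 + 4 * η ^ 3 * (x,s).2 + γ))/2)
          + (η * (x,s).1 + 12 * η ^ 3 * (x,s).2) * Real.sin (2 * (η * (x,s).1 + 4 * η ^ 3 * (x,s).2 + γ)))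
        / (2 * (η * (x,s).1 + 12 * η ^ 3 * (x,s).2) + Real.sin (2 * (η * (x,s).1 + 4 * η ^ 3 * (x,s).2 + γ))) ^ 2) = _
    show (16 * η ^ 2 * (2 * (1/2 + Real.cos (2*(η * x + 4 * η ^ 3 * s + γ))/2)
          + (η * x + 12 * η ^ 3 * s) * Real.sin (2 * (η * x + 4 * η ^ 3 * s + γ)))
        / (2 * (η * x + 12 * η ^ 3 * s) + Real.sin (2 * (η * x + 4 * η ^ 3 * s + γ))) ^ 2) = _
    have hden : (2 * (η * x + 12 * η ^ 3 * s) + Real.sin (2 * (η * x + 4 * η ^ 3 * s + γ)))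
        = (2*(3*(η*x+4*η^3*s+γ)+(-(2*η*x)-3*γ)) + Real.sin (2*(η*x+4*η^3*s+γ))) := by ring
    rw [hden]
    congr 1
    ring
  have hxV : 2*(1*(η*x+(4*η^3*t+γ))+(8*η^3*t-γ)) + Real.sin (2*(η*x+(4*η^3*t+γ))) ≠ 0 := by
    rw [(by ring : η*x+(4*η^3*t+γ) = η*x+4*η^3*t+γ),
      (by ring : 2*(1*(η*x+4*η^3*t+γ)+(8*η^3*t-γ)) = 2*(η*x+12*η^3*t))]
    exact hp0
  have hVopen : IsOpen {y : ℝ |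
      2*(1*(η*y+(4*η^3*t+γ))+(8*η^3*t-γ)) + Real.sin (2*(η*y+(4*η^3*t+γ))) ≠ 0} := by
    have hc : Continuous fun y : ℝ =>
        2*(1*(η*y+(4*η^3*t+γ))+(8*η^3*t-γ)) + Real.sin (2*(η*y+(4*η^3*t+γ))) := by fun_prop
    exact isOpen_compl_singleton.preimage hc
  have hθy : ∀ y : ℝ, HasDerivAt (fun y : ℝ => η*y+(4*η^3*t+γ)) η y := fun y => by
    simpa using ((hasDerivAt_id y).const_mul η).add_const (4*η^3*t+γ)
  have h1 : ∀ y : ℝ, (2*(1*(η*y+(4*η^3*t+γ))+(8*η^3*t-γ)) + Real.sin (2*(η*y+(4*η^3*t+γ)))) ≠ 0 →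
      HasDerivAt (fun y' => u (y', t))
        (16*η^2 * NN1 1 (8*η^3*t-γ) (η*y+(4*η^3*t+γ))
          / (2*(1*(η*y+(4*η^3*t+γ))+(8*η^3*t-γ)) + Real.sin (2*(η*y+(4*η^3*t+γ))))^3 * η) y := by
    intro y hy
    have hcomp := (step0 η 1 (8*η^3*t-γ) (η*y+(4*η^3*t+γ)) hy).comp y (hθy y)
    exact hcomp.congr_of_eventuallyEq (Filter.Eventually.of_forall fun y' => hu_x y')
  have hpx1 : ∀ y : ℝ, (2*(1*(η*y+(4*η^3*t+γ))+(8*η^3*t-γ)) + Real.sin (2*(η*y+(4*η^3*t+γ)))) ≠ 0 →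
      px u (y, t) = 16*η^2 * NN1 1 (8*η^3*t-γ) (η*y+(4*η^3*t+γ))
          / (2*(1*(η*y+(4*η^3*t+γ))+(8*η^3*t-γ)) + Real.sin (2*(η*y+(4*η^3*t+γ))))^3 * η :=
    fun y hy => (h1 y hy).deriv
  have hpx2 : ∀ y : ℝ, (2*(1*(η*y+(4*η^3*t+γ))+(8*η^3*t-γ)) + Real.sin (2*(η*y+(4*η^3*t+γ)))) ≠ 0 →
      px (px u) (y, t) = 16*η^2 * NN2 1 (8*η^3*t-γ) (η*y+(4*η^3*t+γ))
          / (2*(1*(η*y+(4*η^3*t+γ))+(8*η^3*t-γ)) + Real.sin (2*(η*y+(4*η^3*t+γ))))^4 * η * η := by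
    intro y hy
    have heq : (fun y' => px u (y', t)) =ᶠ[nhds y] (fun y' =>
        16*η^2 * NN1 1 (8*η^3*t-γ) (η*y'+(4*η^3*t+γ))
          / (2*(1*(η*y'+(4*η^3*t+γ))+(8*η^3*t-γ)) + Real.sin (2*(η*y'+(4*η^3*t+γ))))^3 * η) :=
      Filter.eventually_of_mem (hVopen.mem_nhds hy) (fun y' hy' => hpx1 y' hy')
    have hder := ((step1 η 1 (8*η^3*t-γ) (η*y+(4*η^3*t+γ)) hy).comp y (hθy y)).mul_const η
    show deriv (fun y' => px u (y', t)) y = _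
    rw [heq.deriv_eq]
    exact hder.deriv
  have hpx3 : px (px (px u)) (x, t) = 16*η^2 * NN3 1 (8*η^3*t-γ) (η*x+(4*η^3*t+γ))
      / (2*(1*(η*x+(4*η^3*t+γ))+(8*η^3*t-γ)) + Real.sin (2*(η*x+(4*η^3*t+γ))))^5 * η * η * η := by
    have heq : (fun y' => px (px u) (y', t)) =ᶠ[nhds x] (fun y' =>
        16*η^2 * NN2 1 (8*η^3*t-γ) (η*y'+(4*η^3*t+γ))
          / (2*(1*(η*y'+(4*η^3*t+γ))+(8*η^3*t-γ)) + Real.sin (2*(η*y'+(4*η^3*t+γ))))^4 * η * η) :=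
      Filter.eventually_of_mem (hVopen.mem_nhds hxV) (fun y' hy' => hpx2 y' hy')
    have hder := (((step2 η 1 (8*η^3*t-γ) (η*x+(4*η^3*t+γ)) hxV).comp x (hθy x)).mul_const η).mul_const η
    show deriv (fun y' => px (px u) (y', t)) x = _
    rw [heq.deriv_eq]
    exact hder.deriv
  have hdent : (2*(3*(4*η^3*t+(η*x+γ))+(-(2*η*x)-3*γ)) + Real.sin (2*(4*η^3*t+(η*x+γ)))) ≠ 0 := by
    rw [(by ring : 4*η^3*t+(η*x+γ) = η*x+4*η^3*t+γ),
      (by ring : 2*(3*(η*x+4*η^3*t+γ)+(-(2*η*x)-3*γ)) = 2*(η*x+12*η^3*t))]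
    exact hp0
  have hθs : HasDerivAt (fun s : ℝ => 4*η^3*s+(η*x+γ)) (4*η^3) t := by
    simpa using ((hasDerivAt_id t).const_mul (4*η^3)).add_const (η*x+γ)
  have hpt : pt u (x, t) = 16*η^2 * NN1 3 (-(2*η*x)-3*γ) (4*η^3*t+(η*x+γ))
      / (2*(3*(4*η^3*t+(η*x+γ))+(-(2*η*x)-3*γ)) + Real.sin (2*(4*η^3*t+(η*x+γ))))^3 * (4*η^3) := by
    have hcomp := (step0 η 3 (-(2*η*x)-3*γ) (4*η^3*t+(η*x+γ)) hdent).comp t hθs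
    exact (hcomp.congr_of_eventuallyEq (Filter.Eventually.of_forall fun s => hu_t s)).deriv
  show pt u (x, t) - 6 * u (x, t) * px u (x, t) + px (px (px u)) (x, t) = 0
  rw [hpt, hu_x x, hpx1 x hxV, hpx3]
  have pyth := Real.sin_sq_add_cos_sq (2*(η*x+4*η^3*t+γ))
  have hfin := final_identity η (η*x+12*η^3*t) (Real.sin (2*(η*x+4*η^3*t+γ)))
    (Real.cos (2*(η*x+4*η^3*t+γ))) pyth hp0
  simp only [NN0, NN1, NN3, QQ0, QQ11, QQ13, QQ31] at hfin ⊢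
  rw [(by ring : η*x+(4*η^3*t+γ) = η*x+4*η^3*t+γ),
    (by ring : 4*η^3*t+(η*x+γ) = η*x+4*η^3*t+γ)]
  linear_combination hfin
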